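/- Let p ∈ (1/2, 1), q = 1 − p, α*, β* ∈ (0,1), and weights π0, π1 > 0 with π0 + π1 = 1. For (ψ0, ψ1) ∈ [0,1]² define p̃ = (1−ψ0−ψ1)·p + ψ0, q̃ = (1−ψ0−ψ1)·q + ψ0, H(x,y) = x·ln(x/y) + (1−x)·ln((1−x)/(1−y)), g0(ψ0,ψ1) = ln(1/β*)·[1/((1−2q̃)·ln(p̃/(1−p̃))) − 1/H(q̃,p̃)], g1(ψ0,ψ1) = ln(1/α*)·[1/((2p̃−1)·ln((1−q̃)/q̃)) − 1/H(p̃,q̃)], and g = π0·g0 + π1·g1. Let E ⊆ [0,1)² be a nonempty compact set contained in the region where p̃ > 1/2 and q̃ < 1/2, which is downward closed (if (ψ0′,ψ1′) ≤ (ψ0,ψ1) componentwise and (ψ0,ψ1) ∈ E, then (ψ0′,ψ1′) ∈ E). Let s0 = max{ψ0 : (ψ0,ψ1) ∈ E for some ψ1} and s1 = max{ψ1 : (ψ0,ψ1) ∈ E for some ψ0}. Assume that on E ∩ {ψ1 > ψ0} one has ∂g_i/∂ψ0 < 0 and ∂g_i/∂ψ1 > 0 for i = 0, 1, and on E ∩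 {ψ0 > ψ1} one has ∂g_i/∂ψ0 > 0 and ∂g_i/∂ψ1 < 0 for i = 0, 1. Then the maximum of g over E equals max{ g(s0, 0), g(0, s1) }; moreover this maximum is strictly positive whenever s0 > 0 or s1 > 0. -/

import Mathlib

noncomputable def ptAux (p : ℝ) (z : ℝ × ℝ) : ℝ := (1 - z.1 - z.2) * p + z.1

noncomputable def HfAux (x y : ℝ) : ℝ :=
  x * Real.log (x / y) + (1 - x) * Real.log ((1 - x) / (1 - y))

noncomputable def GAux (p αs βs π0 π1 : ℝ) (z : ℝ × ℝ) : ℝ :=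
  π0 * (Real.log (1 / βs) *
    (1 / ((1 - 2 * ptAux (1 - p) z) * Real.log (ptAux p z / (1 - ptAux p z)))
      - 1 / HfAux (ptAux (1 - p) z) (ptAux p z))) +
  π1 * (Real.log (1 / αs) *
    (1 / ((2 * ptAux p z - 1) * Real.log ((1 - ptAux (1 - p) z) / ptAux (1 - p) z))
      - 1 / HfAux (ptAux p z) (ptAux (1 - p) z)))

/-- Gibbs' inequality: positivity of binary KL divergence. -/
lemma gibbs_aux {x y : ℝ} (hx0 : 0 < x) (hx1 : x < 1) (hy0 : 0 < y) (hy1 : y < 1)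
    (hne : x ≠ y) : 0 < HfAux x y := by
  unfold HfAux
  have h1x : (0:ℝ) < 1 - x := by linarith
  have h1y : (0:ℝ) < 1 - y := by linarith
  have hne' : y / x ≠ 1 := by
    intro h
    apply hne
    field_simp at h
    linarith
  have h1 : Real.log (y / x) < y / x - 1 :=
    Real.log_lt_sub_one_of_pos (div_pos hy0 hx0) hne'
  have h2 : Real.log ((1 - y) / (1 - x)) ≤ (1 - y) / (1 - x) - 1 :=
    Real.log_le_sub_one_of_pos (div_pos h1y h1x)
  have e1 : Real.log (x / y) = -Real.log (y / x) := by
    rw [Real.log_div hx0.ne' hy0.ne', Real.log_div hy0.ne' hx0.ne']; ring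
  have e2 : Real.log ((1 - x) / (1 - y)) = -Real.log ((1 - y) / (1 - x)) := by
    rw [Real.log_div h1x.ne' h1y.ne', Real.log_div h1y.ne' h1x.ne']; ring
  rw [e1, e2]
  have k1 : x * Real.log (y / x) < y - x := by
    have := mul_lt_mul_of_pos_left h1 hx0
    have e : x * (y / x - 1) = y - x := by field_simp
    linarith [e ▸ this]
  have k2 : (1 - x) * Real.log ((1 - y) / (1 - x)) ≤ x - y := by
    have := mul_le_mul_of_nonneg_left h2 h1x.le
    have e : (1 - x) * ((1 - y) / (1 - x) - 1) = x - y := by field_simp; ring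
    linarith [e ▸ this]
  nlinarith

lemma GAux_contAt (p αs βs π0 π1 : ℝ) (z : ℝ × ℝ)
    (hP0 : 1 / 2 < ptAux p z) (hP1 : ptAux p z < 1)
    (hQ0 : 0 < ptAux (1 - p) z) (hQ1 : ptAux (1 - p) z < 1 / 2) :
    ContinuousAt (GAux p αs βs π0 π1) z := by
  have cP : ContinuousAt (ptAux p) z := by unfold ptAux; fun_prop
  have cQ : ContinuousAt (ptAux (1 - p)) z := by unfold ptAux; fun_prop
  set P := ptAux p z with hPdef
  set Q := ptAux (1 - p) z with hQdef
  have hPpos : (0:ℝ) < P := by linarith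
  have h1P : (0:ℝ) < 1 - P := by linarith
  have h1Q : (0:ℝ) < 1 - Q := by linarith
  have hQP : Q ≠ P := by intro h; rw [h] at hQ1; linarith
  have hPQ : P ≠ Q := fun h => hQP h.symm
  have cHf1 : ContinuousAt (fun z => HfAux (ptAux (1 - p) z) (ptAux p z)) z := by
    unfold HfAux
    exact (cQ.mul ((cQ.div cP hPpos.ne').log
        (div_ne_zero hQ0.ne' hPpos.ne'))).add
      ((continuousAt_const.sub cQ).mul
        (((continuousAt_const.sub cQ).div (continuousAt_const.sub cP) h1P.ne').log
          (div_ne_zero h1Q.ne' h1P.ne')))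
  have cHf2 : ContinuousAt (fun z => HfAux (ptAux p z) (ptAux (1 - p) z)) z := by
    unfold HfAux
    exact (cP.mul ((cP.div cQ hQ0.ne').log
        (div_ne_zero hPpos.ne' hQ0.ne'))).add
      ((continuousAt_const.sub cP).mul
        (((continuousAt_const.sub cP).div (continuousAt_const.sub cQ) h1Q.ne').log
          (div_ne_zero h1P.ne' h1Q.ne')))
  have hHf1 : HfAux Q P ≠ 0 :=
    (gibbs_aux hQ0 (by linarith) hPpos hP1 hQP).ne'
  have hHf2 : HfAux P Q ≠ 0 :=
    (gibbs_aux hPpos hP1 hQ0 (by linarith) hPQ).ne'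
  have hlog1 : Real.log (P / (1 - P)) ≠ 0 := by
    have : 1 < P / (1 - P) := (one_lt_div h1P).mpr (by linarith)
    exact (Real.log_pos this).ne'
  have hden1 : (1 - 2 * Q) * Real.log (P / (1 - P)) ≠ 0 :=
    mul_ne_zero (by linarith) hlog1
  have hlog2 : Real.log ((1 - Q) / Q) ≠ 0 := by
    have : 1 < (1 - Q) / Q := (one_lt_div hQ0).mpr (by linarith)
    exact (Real.log_pos this).ne'
  have hden2 : (2 * P - 1) * Real.log ((1 - Q) / Q) ≠ 0 :=
    mul_ne_zero (by linarith) hlog2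
  have cden1 : ContinuousAt
      (fun z => (1 - 2 * ptAux (1 - p) z) * Real.log (ptAux p z / (1 - ptAux p z))) z :=
    (continuousAt_const.sub (continuousAt_const.mul cQ)).mul
      ((cP.div (continuousAt_const.sub cP) h1P.ne').log (div_ne_zero hPpos.ne' h1P.ne'))
  have cden2 : ContinuousAt
      (fun z => (2 * ptAux p z - 1) * Real.log ((1 - ptAux (1 - p) z) / ptAux (1 - p) z)) z :=
    ((continuousAt_const.mul cP).sub continuousAt_const).mul
      (((continuousAt_const.sub cQ).div cQ hQ0.ne').log (div_ne_zero h1Q.ne' hQ0.ne'))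
  unfold GAux
  exact (continuousAt_const.mul (continuousAt_const.mul
      ((continuousAt_const.div cden1 hden1).sub
        (continuousAt_const.div cHf1 hHf1)))).add
    (continuousAt_const.mul (continuousAt_const.mul
      ((continuousAt_const.div cden2 hden2).sub
        (continuousAt_const.div cHf2 hHf2))))




/-- Theorem 3 of the paper: under the sign conditions (C2) on the partial derivatives
of the objective over the feasible set `E` of encryption parameters (a compact,
downward-closed subset of `[0,1)²` on which `p̃ > 1/2 > q̃`), the maximum of the
weighted objective `g = π0·g0 + π1·g1` over `E` is attained at one of the two axis
corner points `(s0, 0)` or `(0, s1)`, and it is strictly positive whenever `s0 > 0`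
or `s1 > 0`. -/
theorem stmt_19 (p : ℝ) (hp : 1 / 2 < p) (hp1 : p < 1) (q : ℝ) (hq : q = 1 - p)
    (αs βs : ℝ) (hαs : αs ∈ Set.Ioo (0 : ℝ) 1) (hβs : βs ∈ Set.Ioo (0 : ℝ) 1)
    (π0 π1 : ℝ) (hπ0 : 0 < π0) (hπ1 : 0 < π1) (hπ : π0 + π1 = 1)
    (H : ℝ → ℝ → ℝ)
    (hH : ∀ x y, H x y = x * Real.log (x / y) + (1 - x) * Real.log ((1 - x) / (1 - y)))
    (ptf qtf : ℝ → ℝ → ℝ)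
    (hptf : ∀ x y, ptf x y = (1 - x - y) * p + x)
    (hqtf : ∀ x y, qtf x y = (1 - x - y) * q + x)
    (g0 g1 g : ℝ → ℝ → ℝ)
    (hg0 : ∀ x y, g0 x y = Real.log (1 / βs) *
      (1 / ((1 - 2 * qtf x y) * Real.log (ptf x y / (1 - ptf x y)))
        - 1 / H (qtf x y) (ptf x y)))
    (hg1 : ∀ x y, g1 x y = Real.log (1 / αs) *
      (1 / ((2 * ptf x y - 1) * Real.log ((1 - qtf x y) / qtf x y))
        - 1 / H (ptf x y) (qtf x y)))
    (hg : ∀ x y, g x y = π0 * g0 x y + π1 * g1 x y)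
    (E : Set (ℝ × ℝ)) (hEne : E.Nonempty) (hEcpt : IsCompact E)
    (hEsub : E ⊆ Set.Ico (0 : ℝ) 1 ×ˢ Set.Ico (0 : ℝ) 1)
    (hEreg : ∀ ψ ∈ E, 1 / 2 < ptf ψ.1 ψ.2 ∧ qtf ψ.1 ψ.2 < 1 / 2)
    (hEdc : ∀ ψ ∈ E, ∀ ψ' : ℝ × ℝ, 0 ≤ ψ'.1 → 0 ≤ ψ'.2 →
      ψ'.1 ≤ ψ.1 → ψ'.2 ≤ ψ.2 → ψ' ∈ E)
    (s0 s1 : ℝ)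
    (hs0 : IsGreatest {x : ℝ | ∃ y : ℝ, (x, y) ∈ E} s0)
    (hs1 : IsGreatest {y : ℝ | ∃ x : ℝ, (x, y) ∈ E} s1)
    (hsign1 : ∀ ψ ∈ E, ψ.1 < ψ.2 →
      (∃ d < (0 : ℝ), HasDerivAt (fun x => g0 x ψ.2) d ψ.1) ∧
      (∃ d > (0 : ℝ), HasDerivAt (fun y => g0 ψ.1 y) d ψ.2) ∧
      (∃ d < (0 : ℝ), HasDerivAt (fun x => g1 x ψ.2) d ψ.1) ∧
      (∃ d > (0 : ℝ), HasDerivAt (fun y => g1 ψ.1 y) d ψ.2))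
    (hsign2 : ∀ ψ ∈ E, ψ.2 < ψ.1 →
      (∃ d > (0 : ℝ), HasDerivAt (fun x => g0 x ψ.2) d ψ.1) ∧
      (∃ d < (0 : ℝ), HasDerivAt (fun y => g0 ψ.1 y) d ψ.2) ∧
      (∃ d > (0 : ℝ), HasDerivAt (fun x => g1 x ψ.2) d ψ.1) ∧
      (∃ d < (0 : ℝ), HasDerivAt (fun y => g1 ψ.1 y) d ψ.2)) :
    IsGreatest {v : ℝ | ∃ ψ ∈ E, v = g ψ.1 ψ.2} (max (g s0 0) (g 0 s1)) ∧
    ((0 < s0 ∨ 0 < s1) → 0 < max (g s0 0) (g 0 s1)) := by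
  subst hq
  set G := GAux p αs βs π0 π1 with hGdef
  have hGeq : ∀ a b : ℝ, g a b = G (a, b) := by
    intro a b
    rw [hg, hg0, hg1, hH, hH, hptf, hqtf]
    simp [hGdef, GAux, ptAux, HfAux]
  -- regularity of the transformed probabilities on E
  have hreg : ∀ ψ ∈ E, 1 / 2 < ptAux p ψ ∧ ptAux p ψ < 1 ∧
      0 < ptAux (1 - p) ψ ∧ ptAux (1 - p) ψ < 1 / 2 := by
    rintro ⟨a, b⟩ hψ
    obtain ⟨⟨ha, -⟩, hb, -⟩ := hEsub hψ
    have hr := hEreg (a, b) hψ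
    rw [hptf, hqtf] at hr
    obtain ⟨h1, h2⟩ := hr
    simp only at h1 h2 ha hb
    have h1ab : 0 < 1 - a - b := by
      by_contra hco
      push_neg at hco
      have : (1 - a - b) * p ≤ (1 - a - b) * (1 - p) :=
        mul_le_mul_of_nonpos_left (by linarith) hco
      linarith
    have hprod : 0 < (1 - a - b) * (1 - p) := mul_pos h1ab (by linarith)
    simp only [ptAux]
    refine ⟨h1, by nlinarith, by nlinarith, h2⟩
  have hcontE : ∀ ψ ∈ E, ContinuousAt G ψ := fun ψ hψ => by
    obtain ⟨h1, h2, h3, h4⟩ := hreg ψ hψ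
    exact GAux_contAt p αs βs π0 π1 ψ h1 h2 h3 h4
  -- corner points are in E
  obtain ⟨y0, hy0E⟩ := hs0.1
  have hy0nn : (0:ℝ) ≤ y0 := (hEsub hy0E).2.1
  have hs0nn : (0:ℝ) ≤ s0 := (hEsub hy0E).1.1
  have hs0E : (s0, 0) ∈ E := hEdc _ hy0E (s0, 0) hs0nn le_rfl le_rfl hy0nn
  obtain ⟨x0, hx0E⟩ := hs1.1
  have hx0nn : (0:ℝ) ≤ x0 := (hEsub hx0E).1.1
  have hs1nn : (0:ℝ) ≤ s1 := (hEsub hx0E).2.1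
  have hs1E : (0, s1) ∈ E := hEdc _ hx0E (0, s1) le_rfl hs1nn hx0nn le_rfl
  -- slice monotonicity: vertical slices decrease on [0,y] when y ≤ x
  have hanti2 : ∀ x y : ℝ, (x, y) ∈ E → y ≤ x →
      StrictAntiOn (fun t => g x t) (Set.Icc 0 y) := by
    intro x y hxy hyx
    have hxnn : (0:ℝ) ≤ x := (hEsub hxy).1.1
    have hE' : ∀ t ∈ Set.Icc (0:ℝ) y, (x, t) ∈ E := fun t ht =>
      hEdc _ hxy (x, t) hxnn ht.1 le_rfl ht.2
    have hfeq : (fun t => g x t) = fun t => G (x, t) := funext fun t => hGeq x t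
    rw [hfeq]
    apply strictAntiOn_of_deriv_neg (convex_Icc 0 y)
    · intro t ht
      exact ((hcontE _ (hE' t ht)).comp
        ((continuous_const.prodMk continuous_id).continuousAt)).continuousWithinAt
    · intro t ht
      rw [interior_Icc] at ht
      have htE := hE' t ⟨ht.1.le, ht.2.le⟩
      obtain ⟨-, ⟨d0, hd0, hD0⟩, -, ⟨d1, hd1, hD1⟩⟩ :=
        hsign2 (x, t) htE (lt_of_lt_of_le ht.2 hyx)
      have hD0' : HasDerivAt (fun s => g0 x s) d0 t := hD0
      have hD1' : HasDerivAt (fun s => g1 x s) d1 t := hD1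
      have hder : HasDerivAt (fun s => G (x, s)) (π0 * d0 + π1 * d1) t := by
        have h' : HasDerivAt (fun s => π0 * g0 x s + π1 * g1 x s) (π0 * d0 + π1 * d1) t :=
          (hD0'.const_mul π0).add (hD1'.const_mul π1)
        have hfe : (fun s => π0 * g0 x s + π1 * g1 x s) = fun s => G (x, s) :=
          funext fun s => by rw [← hg, hGeq]
        rwa [hfe] at h'
      rw [hder.deriv]
      nlinarith
  -- horizontal slices decrease on [0,x] when x ≤ y
  have hanti1 : ∀ x y : ℝ, (x, y) ∈ E → x ≤ y →
      StrictAntiOn (fun t => g t y) (Set.Icc 0 x) := by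
    intro x y hxy hxy'
    have hynn : (0:ℝ) ≤ y := (hEsub hxy).2.1
    have hE' : ∀ t ∈ Set.Icc (0:ℝ) x, (t, y) ∈ E := fun t ht =>
      hEdc _ hxy (t, y) ht.1 hynn ht.2 le_rfl
    have hfeq : (fun t => g t y) = fun t => G (t, y) := funext fun t => hGeq t y
    rw [hfeq]
    apply strictAntiOn_of_deriv_neg (convex_Icc 0 x)
    · intro t ht
      have cmk : ContinuousAt (fun s : ℝ => (s, y)) t := by fun_prop
      have hca : ContinuousAt (G ∘ fun s : ℝ => (s, y)) t := ContinuousAt.comp (f := fun s : ℝ => (s, y)) (hcontE _ (hE' t ht)) cmk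
      exact hca.continuousWithinAt
    · intro t ht
      rw [interior_Icc] at ht
      have htE := hE' t ⟨ht.1.le, ht.2.le⟩
      obtain ⟨⟨d0, hd0, hD0⟩, -, ⟨d1, hd1, hD1⟩, -⟩ :=
        hsign1 (t, y) htE (lt_of_lt_of_le ht.2 hxy')
      have hD0' : HasDerivAt (fun s => g0 s y) d0 t := hD0
      have hD1' : HasDerivAt (fun s => g1 s y) d1 t := hD1
      have hder : HasDerivAt (fun s => G (s, y)) (π0 * d0 + π1 * d1) t := by
        have h' : HasDerivAt (fun s => π0 * g0 s y + π1 * g1 s y) (π0 * d0 + π1 * d1) t :=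
          (hD0'.const_mul π0).add (hD1'.const_mul π1)
        have hfe : (fun s => π0 * g0 s y + π1 * g1 s y) = fun s => G (s, y) :=
          funext fun s => by rw [← hg, hGeq]
        rwa [hfe] at h'
      rw [hder.deriv]
      nlinarith
  -- monotone along the axes
  have hmono0 : StrictMonoOn (fun t => g t 0) (Set.Icc 0 s0) := by
    have hE' : ∀ t ∈ Set.Icc (0:ℝ) s0, (t, (0:ℝ)) ∈ E := fun t ht =>
      hEdc _ hs0E (t, 0) ht.1 le_rfl ht.2 le_rfl
    have hfeq : (fun t => g t 0) = fun t => G (t, 0) := funext fun t => hGeq t 0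
    rw [hfeq]
    apply strictMonoOn_of_deriv_pos (convex_Icc 0 s0)
    · intro t ht
      have cmk : ContinuousAt (fun s : ℝ => (s, (0:ℝ))) t := by fun_prop
      have hca : ContinuousAt (G ∘ fun s : ℝ => (s, (0:ℝ))) t := ContinuousAt.comp (f := fun s : ℝ => (s, (0:ℝ))) (hcontE _ (hE' t ht)) cmk
      exact hca.continuousWithinAt
    · intro t ht
      rw [interior_Icc] at ht
      have htE := hE' t ⟨ht.1.le, ht.2.le⟩
      obtain ⟨⟨d0, hd0, hD0⟩, -, ⟨d1, hd1, hD1⟩, -⟩ := hsign2 (t, 0) htE ht.1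
      have hD0' : HasDerivAt (fun s => g0 s 0) d0 t := hD0
      have hD1' : HasDerivAt (fun s => g1 s 0) d1 t := hD1
      have hder : HasDerivAt (fun s => G (s, 0)) (π0 * d0 + π1 * d1) t := by
        have h' : HasDerivAt (fun s => π0 * g0 s 0 + π1 * g1 s 0) (π0 * d0 + π1 * d1) t :=
          (hD0'.const_mul π0).add (hD1'.const_mul π1)
        have hfe : (fun s => π0 * g0 s 0 + π1 * g1 s 0) = fun s => G (s, 0) :=
          funext fun s => by rw [← hg, hGeq]
        rwa [hfe] at h'
      rw [hder.deriv]
      nlinarith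
  have hmono1 : StrictMonoOn (fun t => g 0 t) (Set.Icc 0 s1) := by
    have hE' : ∀ t ∈ Set.Icc (0:ℝ) s1, ((0:ℝ), t) ∈ E := fun t ht =>
      hEdc _ hs1E (0, t) le_rfl ht.1 le_rfl ht.2
    have hfeq : (fun t => g 0 t) = fun t => G (0, t) := funext fun t => hGeq 0 t
    rw [hfeq]
    apply strictMonoOn_of_deriv_pos (convex_Icc 0 s1)
    · intro t ht
      exact ((hcontE _ (hE' t ht)).comp
        ((continuous_const.prodMk continuous_id).continuousAt)).continuousWithinAt
    · intro t ht
      rw [interior_Icc] at ht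
      have htE := hE' t ⟨ht.1.le, ht.2.le⟩
      obtain ⟨-, ⟨d0, hd0, hD0⟩, -, ⟨d1, hd1, hD1⟩⟩ := hsign1 (0, t) htE ht.1
      have hD0' : HasDerivAt (fun s => g0 0 s) d0 t := hD0
      have hD1' : HasDerivAt (fun s => g1 0 s) d1 t := hD1
      have hder : HasDerivAt (fun s => G (0, s)) (π0 * d0 + π1 * d1) t := by
        have h' : HasDerivAt (fun s => π0 * g0 0 s + π1 * g1 0 s) (π0 * d0 + π1 * d1) t :=
          (hD0'.const_mul π0).add (hD1'.const_mul π1)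
        have hfe : (fun s => π0 * g0 0 s + π1 * g1 0 s) = fun s => G (0, s) :=
          funext fun s => by rw [← hg, hGeq]
        rwa [hfe] at h'
      rw [hder.deriv]
      nlinarith
  -- the upper bound
  have hub : ∀ ψ ∈ E, g ψ.1 ψ.2 ≤ max (g s0 0) (g 0 s1) := by
    rintro ⟨x, y⟩ hxy
    obtain ⟨⟨hx0, -⟩, hy0, -⟩ := hEsub hxy
    simp only at hx0 hy0 ⊢
    have hxs0 : x ≤ s0 := hs0.2 ⟨y, hxy⟩
    have hys1 : y ≤ s1 := hs1.2 ⟨x, hxy⟩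
    rcases le_total y x with hc | hc
    · have step1 : g x y ≤ g x 0 := by
        rcases eq_or_lt_of_le hy0 with he | hlt
        · rw [← he]
        · exact (hanti2 x y hxy hc ⟨le_rfl, hy0⟩ ⟨hy0, le_rfl⟩ hlt).le
      have step2 : g x 0 ≤ g s0 0 := by
        rcases eq_or_lt_of_le hxs0 with he | hlt
        · rw [he]
        · exact (hmono0 ⟨hx0, hxs0⟩ ⟨hs0nn, le_rfl⟩ hlt).le
      exact le_trans (le_trans step1 step2) (le_max_left _ _)
    · have step1 : g x y ≤ g 0 y := by
        rcases eq_or_lt_of_le hx0 with he | hlt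
        · rw [← he]
        · exact (hanti1 x y hxy hc ⟨le_rfl, hx0⟩ ⟨hx0, le_rfl⟩ hlt).le
      have step2 : g 0 y ≤ g 0 s1 := by
        rcases eq_or_lt_of_le hys1 with he | hlt
        · rw [he]
        · exact (hmono1 ⟨hy0, hys1⟩ ⟨hs1nn, le_rfl⟩ hlt).le
      exact le_trans (le_trans step1 step2) (le_max_right _ _)
  -- value at the origin is zero
  have hg00 : g 0 0 = 0 := by
    have hpt : ptf 0 0 = p := by rw [hptf]; ring
    have hqt : qtf 0 0 = 1 - p := by rw [hqtf]; ring
    have e1 : (1:ℝ) - (1 - p) = p := by ring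
    have hlogflip : Real.log ((1 - p) / p) = -Real.log (p / (1 - p)) := by
      rw [Real.log_div (by linarith) (by linarith),
        Real.log_div (by linarith) (by linarith)]
      ring
    rw [hg, hg0, hg1, hH, hH, hqt, hpt, e1, hlogflip]
    ring
  refine ⟨⟨?_, ?_⟩, ?_⟩
  · rcases le_total (g s0 0) (g 0 s1) with h | h
    · rw [max_eq_right h]; exact ⟨(0, s1), hs1E, rfl⟩
    · rw [max_eq_left h]; exact ⟨(s0, 0), hs0E, rfl⟩
  · rintro v ⟨ψ, hψ, rfl⟩
    exact hub ψ hψ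
  · rintro (h | h)
    · have : g 0 0 < g s0 0 := hmono0 ⟨le_rfl, hs0nn⟩ ⟨hs0nn, le_rfl⟩ h
      rw [hg00] at this
      exact lt_of_lt_of_le this (le_max_left _ _)
    · have : g 0 0 < g 0 s1 := hmono1 ⟨le_rfl, hs1nn⟩ ⟨hs1nn, le_rfl⟩ h
      rw [hg00] at this
      exact lt_of_lt_of_le this (le_max_right _ _)
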